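/- Let g be a k-glue function whose bond graph is bipartite with parts V_1 = {1,…,k′} and V_2 = {k′+1,…,k} (so g(i,j) ≤ 0 whenever i, j are both in V_1 or both in V_2), and let m = k − k′ ≥ 1. Define α(n) = ⋄1 for n ≤ 0 and α(n) = 1⋄ for n > 0; for a ∈ V_1 let M_a = α(g(a, k′+1)) α(g(a, k′+2)) ⋯ α(g(a, k)). Define W_a = ⋄^{k+5} 1 1 M_a 1 ⋄^{k+6} for a ∈ V_1, and, for b ∈ V_2 with c = b − k′, W_b = 1^{k+6} 0 (⋄⋄)^{m−c} (1⋄) (⋄⋄)^{c−1} ⋄ ⋄ 1^{k+5}. Then for all a ∈ V_1 and b ∈ V_2, f(W_a, Rev(W_b)) = 1 if g(a,b) > 0, and f(W_a, Rev(W_b)) = 0 otherwise. -/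

import Mathlib

/-- The alphabet Σ = {0, 1, ⋄} of dipole letters. -/
inductive Dip : Type
  | zero : Dip
  | one : Dip
  | blank : Dip
  deriving DecidableEq

open Dip

/-- The force between a pair of letters: 1 if {x,y} = {0,1}, -1 if x = y ∈ {0,1}, 0 otherwise. -/
def lf : Dip → Dip → ℤ
  | zero, one => 1
  | one, zero => 1
  | zero, zero => -1
  | one, one => -1
  | _, _ => 0

/-- The force between a pair of equal-length words: the sum of letterwise forces. -/
def force (X Y : List Dip) : ℤ := (List.zipWith lf X Y).sum

/-- `n` repetitions of a letter. -/
def rep (n : ℕ) (x : Dip) : List Dip := List.replicate n x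

/-- `n` repetitions of a word. -/
def rep2 (n : ℕ) (p : List Dip) : List Dip := (List.replicate n p).flatten

/-- `α(n) = ⋄1` for `n ≤ 0` and `α(n) = 1⋄` for `n > 0`. -/
def alphamap (n : ℤ) : List Dip := if n ≤ 0 then [blank, one] else [one, blank]

/-- `M_a = α(g(a, k'+1)) α(g(a, k'+2)) ⋯ α(g(a, k))`. -/
def Mword (g : ℕ → ℕ → ℤ) (k' k a : ℕ) : List Dip :=
  ((List.range (k - k')).map fun t => alphamap (g a (k' + 1 + t))).flatten

/-- `W_a = ⋄^{k+5} 1 1 M_a 1 ⋄^{k+6}` for `a ∈ V₁`. -/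
def WA (g : ℕ → ℕ → ℤ) (k' k a : ℕ) : List Dip :=
  rep (k + 5) blank ++ [one, one] ++ Mword g k' k a ++ [one] ++ rep (k + 6) blank

/-- `W_b = 1^{k+6} 0 (⋄⋄)^{m-c} (1⋄) (⋄⋄)^{c-1} ⋄ ⋄ 1^{k+5}` for `b ∈ V₂`, `c = b - k'`. -/
def WB (k' k b : ℕ) : List Dip :=
  rep (k + 6) one ++ [zero] ++ rep2 (k - b) [blank, blank] ++ [one, blank] ++
    rep2 (b - k' - 1) [blank, blank] ++ [blank, blank] ++ rep (k + 5) one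

lemma lf_blank_left (y : Dip) : lf blank y = 0 := by cases y <;> rfl
lemma lf_blank_right (x : Dip) : lf x blank = 0 := by cases x <;> rfl

lemma force_blank_left (n : ℕ) (Y : List Dip) : force (rep n blank) Y = 0 := by
  induction n generalizing Y with
  | zero => rfl
  | succ n ih =>
    cases Y with
    | nil => rfl
    | cons y Y => simpa [force, rep, List.replicate_succ, lf_blank_left] using ih Y

lemma force_blank_right (n : ℕ) (X : List Dip) : force X (rep n blank) = 0 := by
  induction n generalizing X with
  | zero => simp [force, rep]
  | succ n ih =>
    cases X with
    | nil => rfl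
    | cons x X => simpa [force, rep, List.replicate_succ, lf_blank_right] using ih X

lemma force_append (X1 X2 Y1 Y2 : List Dip) (h : X1.length = Y1.length) :
    force (X1 ++ X2) (Y1 ++ Y2) = force X1 Y1 + force X2 Y2 := by
  simp [force, List.zipWith_append h]

lemma alphamap_length (n : ℤ) : (alphamap n).length = 2 := by
  unfold alphamap; split <;> rfl

lemma flat_len (h : ℕ → ℤ) (n : ℕ) :
    (((List.range n).map fun t => alphamap (h t)).flatten).length = 2 * n := by
  induction n with
  | zero => rfl
  | succ n ih => simp [List.range_succ, ih, alphamap_length]; omega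

lemma rep2_blank (n : ℕ) : rep2 n [blank, blank] = rep (2 * n) blank := by
  induction n with
  | zero => rfl
  | succ n ih =>
    simp [rep2, rep, List.replicate_succ] at *
    rw [ih, show 2*(n+1) = 2 + 2*n from by ring, List.replicate_add]
    rfl

lemma force_chunks (n r p q : ℕ) (M1 M2 : List Dip) (x y : Dip)
    (h1 : M1.length = p) (h2 : M2.length = q) :
    force (rep n blank ++ ([one, one] ++ (M1 ++ ([x] ++ ([y] ++ (M2 ++ ([one] ++ rep r blank)))))))
          (rep n one ++ ([blank, blank] ++ (rep p blank ++ ([blank] ++ ([one] ++ (rep q blank ++ ([zero] ++ rep r one)))))))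
    = lf y one + 1 := by
  rw [force_append _ _ _ _ (by simp [rep]),
      force_append _ _ _ _ (by simp),
      force_append _ _ _ _ (by simp [rep, h1]),
      force_append _ _ _ _ (by simp),
      force_append _ _ _ _ (by simp),
      force_append _ _ _ _ (by simp [rep, h2]),
      force_append _ _ _ _ (by simp)]
  rw [force_blank_left, force_blank_right, force_blank_right, force_blank_left]
  simp [force, lf, lf_blank_right]

/-- Forces between the two sides of the bipartite construction: `f(W_a, Rev(W_b)) = 1`
if `g a b > 0` and `0` otherwise. -/
theorem stmt12 (k k' : ℕ) (hm : 1 ≤ k - k') (g : ℕ → ℕ → ℤ)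
    (hsym : ∀ i ∈ Finset.Icc 1 k, ∀ j ∈ Finset.Icc 1 k, g i j = g j i)
    (hbip : ∀ i ∈ Finset.Icc 1 k, ∀ j ∈ Finset.Icc 1 k,
      ((i ≤ k' ∧ j ≤ k') ∨ (k' < i ∧ k' < j)) → g i j ≤ 0) :
    ∀ a ∈ Finset.Icc 1 k', ∀ b ∈ Finset.Icc (k' + 1) k,
      force (WA g k' k a) ((WB k' k b).reverse) = if 0 < g a b then 1 else 0 := by
  intro a _ b hb
  simp only [Finset.mem_Icc] at hb
  obtain ⟨c', rfl⟩ : ∃ c', b = k' + 1 + c' := ⟨b - (k'+1), by omega⟩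
  obtain ⟨d, rfl⟩ : ∃ d, k = k' + 1 + c' + d := ⟨k - (k'+1+c'), by omega⟩
  set b := k' + 1 + c' with hbdef
  set K := k' + 1 + c' + d with hKdef
  set M1 : List Dip := ((List.range c').map fun t => alphamap (g a (k' + 1 + t))).flatten with hM1
  set M2 : List Dip :=
    ((List.range d).map fun t => alphamap (g a (k' + 1 + (c' + 1 + t)))).flatten with hM2
  have hMsplit : Mword g k' K a = M1 ++ alphamap (g a b) ++ M2 := by
    unfold Mword
    rw [show K - k' = (c' + 1) + d from by omega, List.range_add, List.range_succ]
    simp [hM1, hM2, hbdef, Function.comp_def]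
  have hlen1 : M1.length = 2 * c' := flat_len _ _
  have hlen2 : M2.length = 2 * d := flat_len _ _
  have hrev : (WB k' K b).reverse =
      rep (K + 5) one ++ ([blank, blank] ++ (rep (2 * c') blank ++ ([blank] ++
        ([one] ++ (rep (2 * d) blank ++ ([zero] ++ rep (K + 6) one)))))) := by
    unfold WB
    rw [show K - b = d from by omega, show b - k' - 1 = c' from by omega,
      rep2_blank, rep2_blank]
    simp only [rep, List.reverse_append, List.reverse_replicate, List.reverse_cons,
      List.reverse_nil, List.append_assoc, List.nil_append, List.cons_append, List.append_nil]
  have key : ∀ x y : Dip, alphamap (g a b) = [x, y] →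
      force (WA g k' K a) ((WB k' K b).reverse) = lf y one + 1 := by
    intro x y hx
    have hWA : WA g k' K a =
        rep (K + 5) blank ++ ([one, one] ++ (M1 ++ ([x] ++ ([y] ++
          (M2 ++ ([one] ++ rep (K + 6) blank)))))) := by
      unfold WA
      rw [hMsplit, hx]
      simp [List.append_assoc]
    rw [hWA, hrev]
    exact force_chunks _ _ _ _ _ _ _ _ hlen1 hlen2
  by_cases hG : 0 < g a b
  · rw [if_pos hG, key one blank (by unfold alphamap; rw [if_neg (by omega)])]
    rfl
  · rw [if_neg hG, key blank one (by unfold alphamap; rw [if_pos (by omega)])]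
    rfl
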